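/- Let x ∈ ℝ² with 1/√(μt) − 1 ≤ |x| ≤ 1/√(μt) for some 0 < μt ≤ 1, and set Z(t,x) = (1/(4π)) ∫_{|z| ≥ 1/√(μt)} e^{−|x−z|²/4} dz. Then there is an absolute constant C > 0 such that |Z(t,x)| ≥ C. -/

import Mathlib

open MeasureTheory Real

noncomputable section

abbrev Plane := EuclideanSpace ℝ (Fin 2)

/-- `Z(t,x) = (1/(4π)) ∫_{|z| ≥ 1/√(μt)} e^{−|x−z|²/4} dz`. -/
def Zfun (μ t : ℝ) (x : Plane) : ℝ :=
  (1 / (4 * π)) * ∫ z in {z : Plane | 1 / Real.sqrt (μ * t) ≤ ‖z‖},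
    Real.exp (-‖x - z‖ ^ 2 / 4)

lemma exists_far_point (x : Plane) (r : ℝ) (hr : ‖x‖ ≤ r) :
    ∃ p : Plane, ‖p‖ = r ∧ ‖x - p‖ = r - ‖x‖ := by
  have hr0 : 0 ≤ r := (norm_nonneg x).trans hr
  rcases eq_or_ne x 0 with h | h
  · refine ⟨EuclideanSpace.single 0 r, ?_, ?_⟩
    · simp [EuclideanSpace.norm_single, abs_of_nonneg hr0]
    · simp [h, EuclideanSpace.norm_single, abs_of_nonneg hr0]
  · have hx : 0 < ‖x‖ := norm_pos_iff.mpr h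
    refine ⟨(r / ‖x‖) • x, ?_, ?_⟩
    · rw [norm_smul, Real.norm_eq_abs, abs_of_nonneg (by positivity)]
      field_simp
    · have : x - (r / ‖x‖) • x = (1 - r / ‖x‖) • x := by
        rw [sub_smul, one_smul]
      rw [this, norm_smul, Real.norm_eq_abs]
      have h1 : 1 - r / ‖x‖ ≤ 0 := by
        rw [sub_nonpos, le_div_iff₀ hx, one_mul]; exact hr
      rw [abs_of_nonpos h1]
      field_simp
      ring

lemma gauss_integrable (x : Plane) :
    Integrable (fun z : Plane => Real.exp (-‖x - z‖ ^ 2 / 4)) := by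
  have hc := GaussianFourier.integrable_cexp_neg_mul_sq_norm_add
    (V := Plane) (b := (1/4 : ℂ)) (by norm_num) 0 0
  have h1 : Integrable (fun v : Plane => Real.exp (-‖v‖ ^ 2 / 4)) := by
    have hn := hc.norm
    refine hn.congr (Filter.Eventually.of_forall fun v => ?_)
    simp only [Complex.norm_exp]
    congr 1
    simp [Complex.add_re, Complex.mul_re, ← Complex.ofReal_pow, Complex.ofReal_re,
      Complex.ofReal_im]
    ring
  have := h1.comp_sub_left x
  simpa using this

/-- For `1/√(μt) − 1 ≤ |x| ≤ 1/√(μt)` with `0 < μt ≤ 1`, one has `|Z(t,x)| ≥ C`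
for an absolute constant `C > 0` independent of `μ, t, x`. -/
theorem stmt2 :
    ∃ C > (0 : ℝ), ∀ μ t : ℝ, 0 < μ → 0 < t → μ * t ≤ 1 →
      ∀ x : Plane, 1 / Real.sqrt (μ * t) - 1 ≤ ‖x‖ → ‖x‖ ≤ 1 / Real.sqrt (μ * t) →
        C ≤ |Zfun μ t x| := by
  set v0 : ℝ := (volume (Metric.ball (0 : Plane) (1/2))).toReal with hv0
  have hv0pos : 0 < v0 := ENNReal.toReal_pos
    (Metric.measure_ball_pos volume 0 (by norm_num)).ne' measure_ball_lt_top.ne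
  refine ⟨(1 / (4 * π)) * (Real.exp (-(25/16)) * v0), by positivity, ?_⟩
  intro μ t hμ ht hμt x hx1 hx2
  set R : ℝ := 1 / Real.sqrt (μ * t) with hR
  have hμt0 : 0 < μ * t := mul_pos hμ ht
  have hsq : 0 < Real.sqrt (μ * t) := Real.sqrt_pos.mpr hμt0
  have hsq1 : Real.sqrt (μ * t) ≤ 1 := by
    rw [show (1:ℝ) = Real.sqrt 1 by simp]
    exact Real.sqrt_le_sqrt hμt
  have hR1 : 1 ≤ R := by
    rw [hR, le_div_iff₀ hsq, one_mul]; exact hsq1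
  -- choose the point p
  obtain ⟨p, hp, hxp⟩ := exists_far_point x (R + 1) (hx2.trans (by linarith))
  have hxp2 : ‖x - p‖ ≤ 2 := by rw [hxp]; linarith
  set B := Metric.ball p (1/2) with hB
  set S := {z : Plane | R ≤ ‖z‖} with hS
  have hsub : B ⊆ S := by
    intro z hz
    rw [Metric.mem_ball, dist_eq_norm] at hz
    have : ‖p‖ - ‖z‖ ≤ ‖z - p‖ := by
      have := norm_sub_norm_le p z
      rwa [norm_sub_rev z p]
    have hzp : ‖z - p‖ < 1/2 := hz
    simp only [hS, Set.mem_setOf_eq]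
    linarith [hp ▸ this]
  have hint := gauss_integrable x
  have hlb : ∀ z ∈ B, Real.exp (-(25/16)) ≤ Real.exp (-‖x - z‖ ^ 2 / 4) := by
    intro z hz
    rw [Metric.mem_ball, dist_eq_norm] at hz
    have h1 : ‖x - z‖ ≤ 5/2 := by
      calc ‖x - z‖ = ‖(x - p) + (p - z)‖ := by rw [sub_add_sub_cancel]
        _ ≤ ‖x - p‖ + ‖p - z‖ := norm_add_le _ _
        _ ≤ 2 + 1/2 := by
            have : ‖p - z‖ < 1/2 := by rwa [norm_sub_rev]
            linarith
        _ = 5/2 := by norm_num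
    apply Real.exp_le_exp.mpr
    have h2 : ‖x - z‖ ^ 2 ≤ (5/2) ^ 2 := by
      apply sq_le_sq' _ h1; linarith [norm_nonneg (x - z)]
    nlinarith
  have key : Real.exp (-(25/16)) * v0 ≤ ∫ z in S, Real.exp (-‖x - z‖ ^ 2 / 4) := by
    have hvB : (volume B).toReal = v0 := by
      rw [hB, Measure.addHaar_ball_center volume p (1/2), hv0]
    calc Real.exp (-(25/16)) * v0
        = Real.exp (-(25/16)) * (volume B).toReal := by rw [hvB]
      _ ≤ ∫ z in B, Real.exp (-‖x - z‖ ^ 2 / 4) :=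
          by
            have h := setIntegral_ge_of_const_le measurableSet_ball measure_ball_lt_top.ne
              hlb hint.integrableOn
            rw [smul_eq_mul, mul_comm] at h
            exact h
      _ ≤ ∫ z in S, Real.exp (-‖x - z‖ ^ 2 / 4) :=
          setIntegral_mono_set hint.integrableOn
            (Filter.Eventually.of_forall fun z => (Real.exp_pos _).le)
            (HasSubset.Subset.eventuallyLE hsub)
  have hπ : (0:ℝ) < 1 / (4 * π) := by positivity
  have hZ : (1 / (4 * π)) * (Real.exp (-(25/16)) * v0) ≤ Zfun μ t x := by
    rw [Zfun]
    exact mul_le_mul_of_nonneg_left key hπ.le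
  exact hZ.trans (le_abs_self _)

end
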